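/- arXiv:2005.04388 — 2 statements merged into one kernel-verified Lean document; each statement's English description precedes it below -/
import Mathlib

section
/- If a is an accumulation point of A (for every n, Z_n(a) ∩ (A \ mon(a)) ≠ ∅) and the equivalence is not totally disconnected at a in the sense that for every n there exists m > n with Z_m(a) strictly contained in Z_n(a) modulo monads, then there exists a sequence (a_i) of elements of A \ mon(a), lying in pairwise distinct monads, converging to a (i.e., ∀ k ∃ i ∀ j > i, R_k a_j a). -/
theorem stmt9 {C : Type*} (R : ℕ → C → C → Prop)
    (hrefl : ∀ n x, R n x x) (hsymm : ∀ n x y, R n x y → R n y x)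
    (hdec : ∀ n x y, R (n + 1) x y → R n x y)
    (hchain : ∀ n x y z, R (n + 1) x y → R (n + 1) y z → R n x z)
    (A : Set C) (a : C)
    (hacc : ∀ n, ∃ z ∈ A, R n a z ∧ ¬ (∀ m, R m z a))
    (hntd : ∀ n, ∃ m > n, {z | R m a z} ⊆ {z | R n a z} ∧
      ∃ z, R n a z ∧ ¬ R m a z ∧ ¬ (∀ k, R k z a)) :
    ∃ s : ℕ → C,
      (∀ i, s i ∈ A ∧ ¬ (∀ m, R m (s i) a)) ∧
      (∀ i j, i ≠ j → ¬ (∀ m, R m (s i) (s j))) ∧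
      (∀ k, ∃ i, ∀ j > i, R k (s j) a) := by
  classical
  -- monotonicity of R in the index (downward)
  have Rmono : ∀ m n x y, m ≤ n → R n x y → R m x y := by
    intro m n x y h
    induction h with
    | refl => exact id
    | step _ ih => exact fun hr => ih (hdec _ _ _ hr)
  -- a witness level separating z from a
  set K : C → ℕ := fun z => if h : ∃ m, ¬ R m z a then h.choose else 0 with hKdef
  have hK : ∀ z, ¬ (∀ m, R m z a) → ¬ R (K z) z a := by
    intro z hz
    have h : ∃ m, ¬ R m z a := not_forall.mp hz
    simp only [hKdef, dif_pos h]
    exact h.choose_spec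
  -- pick a point of A \ mon(a) in each Z_n(a)
  set pick : ℕ → C := fun n => (hacc n).choose with hpickdef
  have hpick : ∀ n, pick n ∈ A ∧ R n a (pick n) ∧ ¬ (∀ m, R m (pick n) a) := by
    intro n
    obtain ⟨hA, h1, h2⟩ := (hacc n).choose_spec
    exact ⟨hA, h1, h2⟩
  -- the scales
  set nseq : ℕ → ℕ :=
    fun i => Nat.rec 0 (fun i ni => max ni (max i (K (pick ni))) + 1) i with hns
  have hsucc : ∀ i, nseq (i + 1) = max (nseq i) (max i (K (pick (nseq i)))) + 1 := by
    intro i; rfl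
  have hlt : ∀ i, nseq i < nseq (i + 1) := by
    intro i; rw [hsucc]; omega
  have hmono : StrictMono nseq := strictMono_nat_of_lt_succ hlt
  have hge : ∀ i, i ≤ nseq i := by
    intro i
    induction i with
    | zero => exact Nat.zero_le _
    | succ i ih => have := hsucc i; omega
  have hKlt : ∀ i j, i < j → K (pick (nseq i)) < nseq j := by
    intro i j hij
    have h1 : K (pick (nseq i)) < nseq (i + 1) := by rw [hsucc]; omega
    exact lt_of_lt_of_le h1 (hmono.le_iff_le.mpr hij)
  refine ⟨fun i => pick (nseq i), fun i => ⟨(hpick _).1, (hpick _).2.2⟩, ?_, ?_⟩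
  · -- pairwise distinct monads
    have key : ∀ i j, i < j → ¬ (∀ m, R m (pick (nseq i)) (pick (nseq j))) := by
      intro i j hij hall
      have hKi := hK _ (hpick (nseq i)).2.2
      have haj : R (nseq j) a (pick (nseq j)) := (hpick (nseq j)).2.1
      have h1 : R (K (pick (nseq i)) + 1) a (pick (nseq j)) :=
        Rmono _ _ _ _ (hKlt i j hij) haj
      have h2 : R (K (pick (nseq i)) + 1) (pick (nseq i)) (pick (nseq j)) := hall _
      exact hKi (hchain _ _ _ _ h2 (hsymm _ _ _ h1))
    intro i j hij hall
    rcases lt_or_gt_of_ne hij with h | h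
    · exact key i j h hall
    · exact key j i h (fun m => hsymm _ _ _ (hall m))
  · -- convergence
    intro k
    refine ⟨k, fun j hj => ?_⟩
    have : k ≤ nseq j := le_trans (le_of_lt hj) (hge j)
    exact hsymm _ _ _ (Rmono _ _ _ _ this (hpick (nseq j)).2.1)
end

section
/- If the equivalence ≐ on C is compact in the sense that every relation R_n of its generating sequence admits only finite R_n-nets (sets with no two distinct R_n-related elements are finite), then every sequence (a_i)_{i∈ℕ} in C has a subsequence (a_{F(j)}) with F strictly increasing such that all terms a_{F(j)} are pairwise R_n-related for each fixed n up to the index, i.e., the subsequence is ≐-Cauchy: ∀ n ∃ N ∀ j,k ≥ N, R_n a_{F(j)} a_{F(k)}. -/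
theorem stmt18 {C : Type*} (R : ℕ → C → C → Prop)
    (hrefl : ∀ n x, R n x x) (hsymm : ∀ n x y, R n x y → R n y x)
    (hdec : ∀ n x y, R (n + 1) x y → R n x y)
    (hchain : ∀ n x y z, R (n + 1) x y → R (n + 1) y z → R n x z)
    (hcompact : ∀ n, ∀ X : Set C, (∀ x ∈ X, ∀ y ∈ X, x ≠ y → ¬ R n x y) → X.Finite)
    (a : ℕ → C) :
    ∃ G : ℕ → ℕ, StrictMono G ∧
      ∀ n, ∃ N, ∀ j ≥ N, ∀ k ≥ N, R n (a (G j)) (a (G k)) := by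
  classical
  -- Lemma A: from any infinite index set, some point captures infinitely many indices
  have lemA : ∀ n (S : Set ℕ), S.Infinite → ∃ x, {i | i ∈ S ∧ R n (a i) x}.Infinite := by
    intro n S hS
    by_contra h
    push_neg at h
    have hrs : Std.Symm (fun i j => ¬ R n (a i) (a j)) :=
      ⟨fun i j hij hji => hij (hsymm n _ _ hji)⟩
    have key : ∀ s : Finset ℕ, (∀ x ∈ s, x ∈ S) →
        ∃ y, y ∈ S ∧ ∀ x ∈ s, ¬ R n (a x) (a y) := by
      intro s hs
      have hB : (⋃ x ∈ s, {i | i ∈ S ∧ R n (a i) (a x)}).Finite :=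
        Set.Finite.biUnion s.finite_toSet (fun x _ => h (a x))
      obtain ⟨y, hy⟩ := (hS.diff hB).nonempty
      refine ⟨y, hy.1, fun x hx hxy => ?_⟩
      exact hy.2 (Set.mem_biUnion hx ⟨hy.1, hsymm n _ _ hxy⟩)
    obtain ⟨f, hfS, hfp⟩ := exists_seq_of_forall_finset_exists'
      (fun i => i ∈ S) (fun i j => ¬ R n (a i) (a j)) key
    have hinj : Function.Injective fun m => a (f m) := by
      intro i j hij
      by_contra hne
      have : a (f i) = a (f j) := hij
      exact hfp hne (this ▸ hrefl n (a (f i)))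
    have hnet : ∀ x ∈ Set.range fun m => a (f m), ∀ y ∈ Set.range fun m => a (f m),
        x ≠ y → ¬ R n x y := by
      rintro x ⟨i, rfl⟩ y ⟨j, rfl⟩ hxy
      exact hfp fun hij => hxy (by rw [hij])
    exact Set.infinite_range_of_injective hinj (hcompact n _ hnet)
  -- Build nested infinite index sets
  let next : ∀ n : ℕ, {S : Set ℕ // S.Infinite} → {S : Set ℕ // S.Infinite} :=
    fun n S => ⟨{i | i ∈ S.1 ∧ R (n + 1) (a i)
        (Classical.choose (lemA (n + 1) S.1 S.2))},
      Classical.choose_spec (lemA (n + 1) S.1 S.2)⟩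
  let T : ℕ → {S : Set ℕ // S.Infinite} := fun n => Nat.rec ⟨Set.univ, Set.infinite_univ⟩ next n
  have hTsucc : ∀ n, T (n + 1) = next n (T n) := fun n => rfl
  have hTsub : ∀ n, (T (n + 1)).1 ⊆ (T n).1 := by
    intro n i hi
    rw [hTsucc] at hi
    exact hi.1
  have hTmono : ∀ m n, m ≤ n → (T n).1 ⊆ (T m).1 := by
    intro m n hmn
    induction n with
    | zero => simp_all
    | succ k ih =>
      rcases Nat.eq_or_lt_of_le hmn with rfl | hlt
      · exact fun _ h => h
      · exact fun i hi => ih (Nat.lt_succ_iff.mp hlt) (hTsub k hi)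
  have hTrel : ∀ n, ∀ i ∈ (T (n + 1)).1, ∀ j ∈ (T (n + 1)).1, R n (a i) (a j) := by
    intro n i hi j hj
    rw [hTsucc] at hi hj
    exact hchain n _ _ _ hi.2 (hsymm _ _ _ hj.2)
  -- Extract a strictly monotone diagonal sequence
  have hstep : ∀ n m : ℕ, ∃ k ∈ (T n).1, m < k := by
    intro n m
    obtain ⟨k, hk, hk2⟩ := ((T n).2.diff (Set.finite_Iic m)).nonempty
    exact ⟨k, hk, by simpa using hk2⟩
  let G : ℕ → ℕ := fun n => Nat.rec (Classical.choose (hstep 0 0))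
    (fun n p => Classical.choose (hstep (n + 1) p)) n
  have hGsucc : ∀ n, G (n + 1) = Classical.choose (hstep (n + 1) (G n)) := fun n => rfl
  have hGmem : ∀ n, G n ∈ (T n).1 := by
    intro n
    cases n with
    | zero => exact (Classical.choose_spec (hstep 0 0)).1
    | succ k => rw [hGsucc]; exact (Classical.choose_spec (hstep (k + 1) (G k))).1
  have hGlt : ∀ n, G n < G (n + 1) := by
    intro n
    rw [hGsucc]
    exact (Classical.choose_spec (hstep (n + 1) (G n))).2
  refine ⟨G, strictMono_nat_of_lt_succ hGlt, fun n => ⟨n + 1, fun j hj k hk => ?_⟩⟩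
  exact hTrel n _ (hTmono (n + 1) j hj (hGmem j)) _ (hTmono (n + 1) k hk (hGmem k))
end
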